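/- For every k ≥ 2, γ_k(K(r(k+r)−1, r)) = γ_{×k}(K(r(k+r)−1, r)) = γ_{×k,t}(K(r(k+r)−1, r)) = k + r + 1. -/

import Mathlib

open Finset

/-- The vertex set of the Kneser graph `K(n,r)`: the `r`-element subsets of `[n] = {1,…,n}`. -/
def KneserVerts (n r : ℕ) : Finset (Finset ℕ) := (Finset.Icc 1 n).powersetCard r

/-- Adjacency in a Kneser graph: distinct disjoint sets. -/
def KneserAdj (u v : Finset ℕ) : Prop := u ≠ v ∧ Disjoint u v

instance (u v : Finset ℕ) : Decidable (KneserAdj u v) := by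
  unfold KneserAdj; infer_instance

/-- `D` is a `k`-dominating set of `K(n,r)`: every vertex outside `D` has at least
`k` neighbours in `D`. -/
def IsKDomSet (n r k : ℕ) (D : Finset (Finset ℕ)) : Prop :=
  D ⊆ KneserVerts n r ∧
    ∀ v ∈ KneserVerts n r, v ∉ D → k ≤ (D.filter fun u => KneserAdj v u).card

/-- `D` is a `k`-tuple dominating set of `K(n,r)`: every vertex has at least `k`
vertices of `D` in its closed neighbourhood. -/
def IsKTupleDomSet (n r k : ℕ) (D : Finset (Finset ℕ)) : Prop :=
  D ⊆ KneserVerts n r ∧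
    ∀ v ∈ KneserVerts n r, k ≤ (D.filter fun u => u = v ∨ KneserAdj v u).card

/-- `D` is a `k`-tuple total dominating set of `K(n,r)`: every vertex has at least
`k` neighbours in `D`. -/
def IsKTupleTotalDomSet (n r k : ℕ) (D : Finset (Finset ℕ)) : Prop :=
  D ⊆ KneserVerts n r ∧
    ∀ v ∈ KneserVerts n r, k ≤ (D.filter fun u => KneserAdj v u).card

/-- The `k`-domination number `γ_k(K(n,r))`. -/
noncomputable def kdomNum (n r k : ℕ) : ℕ :=
  sInf {m | ∃ D, IsKDomSet n r k D ∧ D.card = m}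

/-- The `k`-tuple domination number `γ_{×k}(K(n,r))`. -/
noncomputable def ktupleDomNum (n r k : ℕ) : ℕ :=
  sInf {m | ∃ D, IsKTupleDomSet n r k D ∧ D.card = m}

/-- The `k`-tuple total domination number `γ_{×k,t}(K(n,r))`. -/
noncomputable def ktupleTotalDomNum (n r k : ℕ) : ℕ :=
  sInf {m | ∃ D, IsKTupleTotalDomSet n r k D ∧ D.card = m}

/-- `S` is a 2-packing of `K(n,r)`: any two distinct members are neither adjacent
nor have a common neighbour (i.e. are at distance at least 3). -/
def IsTwoPacking (n r : ℕ) (S : Finset (Finset ℕ)) : Prop :=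
  S ⊆ KneserVerts n r ∧
    ∀ u ∈ S, ∀ v ∈ S, u ≠ v →
      ¬ KneserAdj u v ∧ ∀ w ∈ KneserVerts n r, ¬ (KneserAdj u w ∧ KneserAdj w v)

/-- The 2-packing number `ρ₂(K(n,r))`. -/
noncomputable def twoPackingNum (n r : ℕ) : ℕ :=
  sSup {m | ∃ S, IsTwoPacking n r S ∧ S.card = m}

/-- A clique in a Kneser graph: a family of pairwise disjoint sets. -/
def IsKneserClique (D : Finset (Finset ℕ)) : Prop :=
  ∀ u ∈ D, ∀ v ∈ D, u ≠ v → Disjoint u v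


lemma mem_KV {n r : ℕ} {v : Finset ℕ} :
    v ∈ KneserVerts n r ↔ v ⊆ Finset.Icc 1 n ∧ v.card = r := by
  simp [KneserVerts, Finset.mem_powersetCard]

/-- If `v` is a vertex outside a `k`-dominating set `D` which meets every member of a
subfamily `H` of size `> |D| - k`, we get a contradiction. -/
lemma kdom_contra {n r k : ℕ} {D H : Finset (Finset ℕ)} {v : Finset ℕ}
    (hD : IsKDomSet n r k D) (hv : v ∈ KneserVerts n r) (hvD : v ∉ D)
    (hH : H ⊆ D) (hhit : ∀ A ∈ H, ¬ Disjoint v A)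
    (hcard : D.card - k + 1 ≤ H.card) (hkm : k ≤ D.card) : False := by
  have h1 : k ≤ (D.filter fun u => KneserAdj v u).card := hD.2 v hv hvD
  have h2 : (D.filter fun u => KneserAdj v u) ⊆ D \ H := by
    intro A hA
    rw [Finset.mem_filter] at hA
    rw [Finset.mem_sdiff]
    exact ⟨hA.1, fun hAH => hhit A hAH hA.2.2⟩
  have h3 : (D \ H).card = D.card - H.card := Finset.card_sdiff_of_subset hH
  have h4 := Finset.card_le_card h2
  have h5 := Finset.card_le_card hH
  omega

/-- Greedy distinct transversal: given a family `T` of sets of size `≥ r` inside `Icc 1 n`,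
and a forbidden set `F` with `|F| + |T| ≤ r`, there is a set `Q` of `|T|` distinct points,
avoiding `F`, contained in the union of `T`, meeting every member of `T`. -/
lemma exists_transversal {n r : ℕ} :
    ∀ (T : Finset (Finset ℕ)), (∀ A ∈ T, r ≤ A.card ∧ A ⊆ Finset.Icc 1 n) →
    ∀ (F : Finset ℕ), F.card + T.card ≤ r →
    ∃ Q : Finset ℕ, Q.card = T.card ∧ Disjoint Q F ∧ Q ⊆ Finset.Icc 1 n ∧
      (∀ q ∈ Q, ∃ A ∈ T, q ∈ A) ∧ (∀ A ∈ T, ∃ q ∈ Q, q ∈ A) := by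
  intro T
  induction T using Finset.induction_on with
  | empty => intro _ F _; exact ⟨∅, by simp⟩
  | @insert A T hAT ih =>
    intro hmem F hcard
    rw [Finset.card_insert_of_notMem hAT] at hcard
    obtain ⟨Q, hQcard, hQF, hQn, hQin, hQhit⟩ :=
      ih (fun B hB => hmem B (Finset.mem_insert_of_mem hB)) F (by omega)
    have hA := hmem A (Finset.mem_insert_self A T)
    have hex : (A \ (F ∪ Q)).Nonempty := by
      apply Finset.card_pos.mp
      have : (A \ (F ∪ Q)).card ≥ A.card - (F ∪ Q).card := Finset.le_card_sdiff _ _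
      have h2 : (F ∪ Q).card ≤ F.card + Q.card := Finset.card_union_le _ _
      omega
    obtain ⟨q, hq⟩ := hex
    rw [Finset.mem_sdiff, Finset.mem_union] at hq
    push_neg at hq
    refine ⟨insert q Q, ?_, ?_, ?_, ?_, ?_⟩
    · rw [Finset.card_insert_of_notMem hq.2.2, hQcard,
        Finset.card_insert_of_notMem hAT]
    · rw [Finset.disjoint_left]
      intro x hx
      rcases Finset.mem_insert.mp hx with rfl | hx
      · exact hq.2.1
      · exact Finset.disjoint_left.mp hQF hx
    · intro x hx
      rcases Finset.mem_insert.mp hx with rfl | hx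
      · exact hA.2 hq.1
      · exact hQn hx
    · intro x hx
      rcases Finset.mem_insert.mp hx with rfl | hx
      · exact ⟨A, Finset.mem_insert_self A T, hq.1⟩
      · obtain ⟨B, hB, hxB⟩ := hQin x hx
        exact ⟨B, Finset.mem_insert_of_mem hB, hxB⟩
    · intro B hB
      rcases Finset.mem_insert.mp hB with rfl | hB
      · exact ⟨q, Finset.mem_insert_self q Q, hq.1⟩
      · obtain ⟨x, hx, hxB⟩ := hQhit B hB
        exact ⟨x, Finset.mem_insert_of_mem hx, hxB⟩


/-- number of members of `D` containing `x` -/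
def multCount (D : Finset (Finset ℕ)) (x : ℕ) : ℕ := (D.filter (fun A => x ∈ A)).card

lemma sum_card_eq_sum_mult (D : Finset (Finset ℕ)) :
    ∑ A ∈ D, A.card = ∑ x ∈ D.biUnion id, multCount D x := by
  have h1 : ∀ A ∈ D, A.card = ∑ x ∈ D.biUnion id, (if x ∈ A then 1 else 0) := by
    intro A hA
    rw [← Finset.card_filter]
    congr 1
    rw [Finset.filter_mem_eq_inter]
    exact (Finset.inter_eq_right.mpr (Finset.subset_biUnion_of_mem id hA)).symm
  rw [Finset.sum_congr rfl h1, Finset.sum_comm]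
  apply Finset.sum_congr rfl
  intro x _
  rw [multCount, Finset.card_filter]

lemma mult_pos (D : Finset (Finset ℕ)) {x : ℕ} (hx : x ∈ D.biUnion id) :
    1 ≤ multCount D x := by
  rw [Finset.mem_biUnion] at hx
  obtain ⟨A, hA, hxA⟩ := hx
  apply Finset.card_pos.mpr
  exact ⟨A, Finset.mem_filter.mpr ⟨hA, hxA⟩⟩

lemma union_card_mult (D : Finset (Finset ℕ)) {p : ℕ} (hp : p ∈ D.biUnion id) :
    (D.biUnion id).card + multCount D p ≤ (∑ A ∈ D, A.card) + 1 := by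
  rw [sum_card_eq_sum_mult]
  have h1 : ∑ x ∈ D.biUnion id, multCount D x =
      multCount D p + ∑ x ∈ (D.biUnion id).erase p, multCount D x := by
    rw [Finset.add_sum_erase _ _ hp]
  have h2 : ((D.biUnion id).erase p).card ≤ ∑ x ∈ (D.biUnion id).erase p, multCount D x := by
    calc ((D.biUnion id).erase p).card = ∑ x ∈ (D.biUnion id).erase p, 1 := by
          rw [Finset.card_eq_sum_ones]
      _ ≤ _ := Finset.sum_le_sum (fun x hx => mult_pos D (Finset.mem_of_mem_erase hx))
  have h3 : ((D.biUnion id).erase p).card = (D.biUnion id).card - 1 :=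
    Finset.card_erase_of_mem hp
  have h4 : 1 ≤ (D.biUnion id).card := Finset.card_pos.mpr ⟨p, hp⟩
  omega


lemma lower_bound (k r : ℕ) (hk : 2 ≤ k) (hr : 2 ≤ r) (D : Finset (Finset ℕ))
    (hD : IsKDomSet (r*(k+r)-1) r k D) : k + r + 1 ≤ D.card := by
  set n := r*(k+r)-1 with hn
  have h8 : 8 ≤ r*(k+r) := by nlinarith
  have hn1 : n + 1 = r*(k+r) := by omega
  have hkr2 : 2*(k+r) ≤ r*(k+r) := Nat.mul_le_mul_right _ hr
  by_contra hlt
  push_neg at hlt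
  set m := D.card with hm
  have hmem : ∀ A ∈ D, A.card = r ∧ A ⊆ Finset.Icc 1 n := by
    intro A hA
    have := mem_KV.mp (hD.1 hA)
    exact ⟨this.2, this.1⟩
  -- a vertex outside D
  have hvex : ∃ v ∈ KneserVerts n r, v ∉ D := by
    by_contra hcon
    push_neg at hcon
    set S := (Finset.Icc r n).image (fun x => insert x (Finset.Icc 1 (r-1))) with hS
    have hSsub : S ⊆ D := by
      intro v hv
      rw [hS, Finset.mem_image] at hv
      obtain ⟨x, hx, rfl⟩ := hv
      rw [Finset.mem_Icc] at hx
      apply hcon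
      rw [mem_KV]
      constructor
      · intro y hy
        rcases Finset.mem_insert.mp hy with rfl | hy
        · rw [Finset.mem_Icc]; omega
        · rw [Finset.mem_Icc] at hy ⊢; omega
      · rw [Finset.card_insert_of_notMem (by rw [Finset.mem_Icc]; omega),
          Nat.card_Icc]
        omega
    have hinj : Set.InjOn (fun x => insert x (Finset.Icc 1 (r-1))) (Finset.Icc r n) := by
      intro x hx y hy hxy
      simp only [Finset.coe_Icc, Set.mem_Icc] at hx hy
      have hxy' : insert x (Finset.Icc 1 (r-1)) = insert y (Finset.Icc 1 (r-1)) := hxy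
      have : x ∈ insert y (Finset.Icc 1 (r-1)) := by
        rw [← hxy']; exact Finset.mem_insert_self _ _
      rcases Finset.mem_insert.mp this with h | h
      · exact h
      · rw [Finset.mem_Icc] at h; omega
    have hScard : S.card = n + 1 - r := by
      rw [hS, Finset.card_image_of_injOn hinj, Nat.card_Icc]
    have := Finset.card_le_card hSsub
    omega
  obtain ⟨v₀, hv₀V, hv₀D⟩ := hvex
  have hkm : k ≤ m := by
    have h1 := hD.2 v₀ hv₀V hv₀D
    have h2 : (D.filter fun u => KneserAdj v₀ u) ⊆ D := Finset.filter_subset _ _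
    have := Finset.card_le_card h2
    omega
  set U := D.biUnion id with hU
  have hUsub : U ⊆ Finset.Icc 1 n := by
    intro x hx
    rw [hU, Finset.mem_biUnion] at hx
    obtain ⟨A, hA, hxA⟩ := hx
    exact (hmem A hA).2 hxA
  have hsum : ∑ A ∈ D, A.card = m * r := by
    rw [Finset.sum_congr rfl (fun A hA => (hmem A hA).1), Finset.sum_const, smul_eq_mul]
  have hUle : U.card ≤ m * r := by
    rw [← hsum]
    exact le_trans (Finset.card_biUnion_le) (le_refl _)
  have hUcard_le_n : U.card ≤ n := by
    have := Finset.card_le_card hUsub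
    rwa [Nat.card_Icc, Nat.add_sub_cancel] at this
  have havail : (Finset.Icc 1 n \ U).card = n - U.card := by
    rw [Finset.card_sdiff_of_subset hUsub, Nat.card_Icc, Nat.add_sub_cancel]
  by_cases hd2 : ∃ p A B, A ∈ D ∧ B ∈ D ∧ A ≠ B ∧ p ∈ A ∧ p ∈ B
  · -- some point in two members
    obtain ⟨p, A, B, hA, hB, hAB, hpA, hpB⟩ := hd2
    have hpU : p ∈ U := Finset.mem_biUnion.mpr ⟨A, hA, hpA⟩
    have hmult2 : 2 ≤ multCount D p := by
      have hsub : ({A, B} : Finset (Finset ℕ)) ⊆ D.filter (fun C => p ∈ C) := by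
        intro C hC
        rcases Finset.mem_insert.mp hC with rfl | hC
        · exact Finset.mem_filter.mpr ⟨hA, hpA⟩
        · rw [Finset.mem_singleton] at hC; subst hC
          exact Finset.mem_filter.mpr ⟨hB, hpB⟩
      have h2 : ({A, B} : Finset (Finset ℕ)).card = 2 := by
        rw [Finset.card_insert_of_notMem (by simpa using hAB), Finset.card_singleton]
      have := Finset.card_le_card hsub
      rw [h2] at this
      exact this
    have hUm1 : U.card + 1 ≤ m * r := by
      have h0 := union_card_mult D hpU
      rw [hsum, ← hU] at h0
      unfold multCount at hmult2 h0
      omega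
    by_cases hmle : m ≤ k + r - 1
    · -- case B1

      set t := m - k + 1 with ht
      have htr : t ≤ r := by omega
      have hslack : m * r + r ≤ n + 1 := by
        calc m*r + r = (m+1)*r := by ring
          _ ≤ (k+r)*r := Nat.mul_le_mul_right r (by omega)
          _ = r*(k+r) := by ring
          _ = n+1 := hn1.symm
      have hABsubD : ({A, B} : Finset (Finset ℕ)) ⊆ D := by
        intro C hC
        rcases Finset.mem_insert.mp hC with rfl | hC
        · exact hA
        · rw [Finset.mem_singleton] at hC; subst hC; exact hB
      have hABc : ({A, B} : Finset (Finset ℕ)).card = 2 := by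
        rw [Finset.card_insert_of_notMem (by simpa using hAB), Finset.card_singleton]
      have hD2card : (D \ {A, B}).card = m - 2 := by
        rw [Finset.card_sdiff_of_subset hABsubD, hABc]
      obtain ⟨T, hTsub, hTcard⟩ := Finset.exists_subset_card_eq (s := D \ {A, B}) (n := t - 2)
        (by rw [hD2card]; omega)
      have hTD : T ⊆ D := fun C hC => (Finset.mem_sdiff.mp (hTsub hC)).1
      obtain ⟨Q, hQcard, hQF, hQn, hQin, hQhit⟩ :=
        exists_transversal T
          (fun C hC => ⟨le_of_eq (hmem C (hTD hC)).1.symm, (hmem C (hTD hC)).2⟩)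
          {p} (by rw [Finset.card_singleton, hTcard]; omega)
      set o := r - 1 - (t - 2) with ho
      obtain ⟨O, hOsub, hOcard⟩ := Finset.exists_subset_card_eq (s := Finset.Icc 1 n \ U) (n := o)
        (by rw [havail]; omega)
      have hQU : Q ⊆ U := by
        intro q hq
        obtain ⟨C, hCT, hqC⟩ := hQin q hq
        exact Finset.mem_biUnion.mpr ⟨C, hTD hCT, hqC⟩
      have hpQ : p ∉ Q := fun hpQ =>
        (Finset.disjoint_left.mp hQF hpQ) (Finset.mem_singleton_self p)
      have hpO : p ∉ O := fun hpO =>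
        (Finset.mem_sdiff.mp (hOsub hpO)).2 (Finset.mem_biUnion.mpr ⟨A, hA, hpA⟩)
      have hQO : Disjoint Q O := by
        rw [Finset.disjoint_left]
        intro q hq hqO
        exact (Finset.mem_sdiff.mp (hOsub hqO)).2 (hQU hq)
      set v := insert p (Q ∪ O) with hv
      have hvcard : v.card = r := by
        rw [hv, Finset.card_insert_of_notMem
            (fun h => by rcases Finset.mem_union.mp h with h | h; exact hpQ h; exact hpO h),
          Finset.card_union_of_disjoint hQO, hQcard, hTcard, hOcard]
        omega
      have hvsub : v ⊆ Finset.Icc 1 n := by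
        intro x hx
        rcases Finset.mem_insert.mp hx with rfl | hx
        · exact (hmem A hA).2 hpA
        · rcases Finset.mem_union.mp hx with hx | hx
          · exact hQn hx
          · exact (Finset.mem_sdiff.mp (hOsub hx)).1
      have hOne : O.Nonempty := Finset.card_pos.mp (by omega)
      have hvD : v ∉ D := by
        intro hvD
        obtain ⟨oo, hoo⟩ := hOne
        exact (Finset.mem_sdiff.mp (hOsub hoo)).2
          (Finset.mem_biUnion.mpr
            ⟨v, hvD, Finset.mem_insert_of_mem (Finset.mem_union_right _ hoo)⟩)
      have hAnotin : A ∉ insert B T := by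
        rw [Finset.mem_insert]
        push_neg
        exact ⟨hAB, fun hAT =>
          (Finset.mem_sdiff.mp (hTsub hAT)).2 (Finset.mem_insert_self _ _)⟩
      have hBnotin : B ∉ T := fun hBT =>
        (Finset.mem_sdiff.mp (hTsub hBT)).2
          (Finset.mem_insert_of_mem (Finset.mem_singleton_self _))
      have hHcard : (insert A (insert B T)).card = 2 + (t - 2) := by
        rw [Finset.card_insert_of_notMem hAnotin,
          Finset.card_insert_of_notMem hBnotin, hTcard]
        omega
      have hHsub : insert A (insert B T) ⊆ D := by
        intro C hC
        rcases Finset.mem_insert.mp hC with rfl | hC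
        · exact hA
        rcases Finset.mem_insert.mp hC with rfl | hC
        · exact hB
        · exact hTD hC
      apply kdom_contra hD (mem_KV.mpr ⟨hvsub, hvcard⟩) hvD hHsub ?_
        (by rw [hHcard]; omega) hkm
      intro C hC
      rcases Finset.mem_insert.mp hC with rfl | hC
      · exact Finset.not_disjoint_iff.mpr ⟨p, Finset.mem_insert_self _ _, hpA⟩
      rcases Finset.mem_insert.mp hC with rfl | hC
      · exact Finset.not_disjoint_iff.mpr ⟨p, Finset.mem_insert_self _ _, hpB⟩
      · obtain ⟨q, hqQ, hqC⟩ := hQhit C hC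
        exact Finset.not_disjoint_iff.mpr
          ⟨q, Finset.mem_insert_of_mem (Finset.mem_union_left _ hqQ), hqC⟩
    · -- case B2 : m = k + r

      have hmeq : m = k + r := by omega
      have hmrn : m * r = n + 1 := by rw [hmeq, hn1, Nat.mul_comm]
      by_cases hd3 : ∃ q, 3 ≤ multCount D q
      · -- B2a : a point of multiplicity ≥ 3
        obtain ⟨p3, hp3⟩ := hd3
        set Mp := D.filter (fun C => p3 ∈ C) with hMp
        set dd := Mp.card with hdd
        have hdd3 : 3 ≤ dd := hp3
        have hp3U : p3 ∈ U := by
          obtain ⟨C, hC⟩ : Mp.Nonempty := Finset.card_pos.mp (by omega)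
          rw [hMp, Finset.mem_filter] at hC
          exact Finset.mem_biUnion.mpr ⟨C, hC.1, hC.2⟩
        have hUdd : U.card + dd ≤ m * r + 1 := by
          have h0 := union_card_mult D hp3U
          rw [hsum, ← hU] at h0
          unfold multCount at h0
          exact h0
        set t1 := r + 1 - dd with ht1
        set o := r - 1 - t1 with ho2
        have hDMp : (D \ Mp).card = m - dd := by
          rw [Finset.card_sdiff_of_subset (Finset.filter_subset _ _)]
        obtain ⟨T, hTsub, hTcard⟩ := Finset.exists_subset_card_eq (s := D \ Mp) (n := t1)
          (by rw [hDMp]; omega)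
        have hTD : T ⊆ D := fun C hC => (Finset.mem_sdiff.mp (hTsub hC)).1
        obtain ⟨Q, hQcard, hQF, hQn, hQin, hQhit⟩ :=
          exists_transversal T
            (fun C hC => ⟨le_of_eq (hmem C (hTD hC)).1.symm, (hmem C (hTD hC)).2⟩)
            {p3} (by rw [Finset.card_singleton, hTcard]; omega)
        obtain ⟨O, hOsub, hOcard⟩ := Finset.exists_subset_card_eq (s := Finset.Icc 1 n \ U) (n := o)
          (by rw [havail]; omega)
        have hQU : Q ⊆ U := by
          intro q hq
          obtain ⟨C, hCT, hqC⟩ := hQin q hq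
          exact Finset.mem_biUnion.mpr ⟨C, hTD hCT, hqC⟩
        have hpQ : p3 ∉ Q := fun hpQ =>
          (Finset.disjoint_left.mp hQF hpQ) (Finset.mem_singleton_self p3)
        have hpO : p3 ∉ O := fun hpO =>
          (Finset.mem_sdiff.mp (hOsub hpO)).2 hp3U
        have hQO : Disjoint Q O := by
          rw [Finset.disjoint_left]
          intro q hq hqO
          exact (Finset.mem_sdiff.mp (hOsub hqO)).2 (hQU hq)
        set v := insert p3 (Q ∪ O) with hv
        have hvcard : v.card = r := by
          rw [hv, Finset.card_insert_of_notMem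
              (fun h => by rcases Finset.mem_union.mp h with h | h; exact hpQ h; exact hpO h),
            Finset.card_union_of_disjoint hQO, hQcard, hTcard, hOcard]
          omega
        have hvsub : v ⊆ Finset.Icc 1 n := by
          intro x hx
          rcases Finset.mem_insert.mp hx with rfl | hx
          · exact hUsub hp3U
          · rcases Finset.mem_union.mp hx with hx | hx
            · exact hQn hx
            · exact (Finset.mem_sdiff.mp (hOsub hx)).1
        have hOne : O.Nonempty := Finset.card_pos.mp (by omega)
        have hvD : v ∉ D := by
          intro hvD
          obtain ⟨oo, hoo⟩ := hOne
          exact (Finset.mem_sdiff.mp (hOsub hoo)).2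
            (Finset.mem_biUnion.mpr
              ⟨v, hvD, Finset.mem_insert_of_mem (Finset.mem_union_right _ hoo)⟩)
        have hMpT : Disjoint Mp T := by
          rw [Finset.disjoint_left]
          intro C hCMp hCT
          exact (Finset.mem_sdiff.mp (hTsub hCT)).2 hCMp
        have hHcard : (Mp ∪ T).card = dd + t1 := by
          rw [Finset.card_union_of_disjoint hMpT, hTcard]
        have hHsub : Mp ∪ T ⊆ D := by
          intro C hC
          rcases Finset.mem_union.mp hC with hC | hC
          · exact (Finset.mem_filter.mp hC).1
          · exact hTD hC
        apply kdom_contra hD (mem_KV.mpr ⟨hvsub, hvcard⟩) hvD hHsub ?_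
          (by rw [hHcard]; omega) hkm
        intro C hC
        rcases Finset.mem_union.mp hC with hC | hC
        · exact Finset.not_disjoint_iff.mpr
            ⟨p3, Finset.mem_insert_self _ _, (Finset.mem_filter.mp hC).2⟩
        · obtain ⟨q, hqQ, hqC⟩ := hQhit C hC
          exact Finset.not_disjoint_iff.mpr
            ⟨q, Finset.mem_insert_of_mem (Finset.mem_union_left _ hqQ), hqC⟩
      · -- B2b : every point has multiplicity ≤ 2
        push_neg at hd3
        have hABsubD : ({A, B} : Finset (Finset ℕ)) ⊆ D := by
          intro C hC
          rcases Finset.mem_insert.mp hC with rfl | hC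
          · exact hA
          · rw [Finset.mem_singleton] at hC; subst hC; exact hB
        have hABc : ({A, B} : Finset (Finset ℕ)).card = 2 := by
          rw [Finset.card_insert_of_notMem (by simpa using hAB), Finset.card_singleton]
        have hsubAB : ({A, B} : Finset (Finset ℕ)) ⊆ D.filter (fun C => p ∈ C) := by
          intro C hC
          rcases Finset.mem_insert.mp hC with rfl | hC
          · exact Finset.mem_filter.mpr ⟨hA, hpA⟩
          · rw [Finset.mem_singleton] at hC; subst hC
            exact Finset.mem_filter.mpr ⟨hB, hpB⟩
        have hMpAB : D.filter (fun C => p ∈ C) = {A, B} := by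
          symm
          apply Finset.eq_of_subset_of_card_le hsubAB
          rw [hABc]
          have := hd3 p
          unfold multCount at this
          omega
        have claim : ∀ E ∈ D, E ≠ A → E ≠ B → ∀ q ∈ E, q ∈ A ∪ B := by
          intro E hE hEA hEB q hqE
          have hpE : p ∉ E := by
            intro h
            have hEf : E ∈ D.filter (fun C => p ∈ C) := Finset.mem_filter.mpr ⟨hE, h⟩
            rw [hMpAB] at hEf
            rcases Finset.mem_insert.mp hEf with h' | h'
            · exact hEA h'
            · exact hEB (Finset.mem_singleton.mp h')
          have hpq : p ≠ q := fun h => hpE (h ▸ hqE)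
          have hABEsub : ({A, B, E} : Finset (Finset ℕ)) ⊆ D := by
            intro C hC
            rcases Finset.mem_insert.mp hC with rfl | hC
            · exact hA
            rcases Finset.mem_insert.mp hC with rfl | hC
            · exact hB
            · rw [Finset.mem_singleton] at hC; subst hC; exact hE
          have hABEc : ({A, B, E} : Finset (Finset ℕ)).card = 3 := by
            rw [Finset.card_insert_of_notMem (by
                simp only [Finset.mem_insert, Finset.mem_singleton]
                push_neg
                exact ⟨hAB, fun h => hEA h.symm⟩),
              Finset.card_insert_of_notMem (by
                simp only [Finset.mem_singleton]
                exact fun h => hEB h.symm),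
              Finset.card_singleton]
          have hD3card : (D \ {A, B, E}).card = m - 3 := by
            rw [Finset.card_sdiff_of_subset hABEsub, hABEc]
          obtain ⟨T, hTsub, hTcard⟩ := Finset.exists_subset_card_eq (s := D \ {A, B, E}) (n := r - 2)
            (by rw [hD3card]; omega)
          have hTD : T ⊆ D := fun C hC => (Finset.mem_sdiff.mp (hTsub hC)).1
          have hFc : ({p, q} : Finset ℕ).card = 2 := by
            rw [Finset.card_insert_of_notMem (by simpa using hpq), Finset.card_singleton]
          obtain ⟨Q, hQcard, hQF, hQn, hQin, hQhit⟩ :=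
            exists_transversal T
              (fun C hC => ⟨le_of_eq (hmem C (hTD hC)).1.symm, (hmem C (hTD hC)).2⟩)
              {p, q} (by rw [hFc, hTcard]; omega)
          have hpQ : p ∉ Q := fun h =>
            (Finset.disjoint_left.mp hQF h) (Finset.mem_insert_self _ _)
          have hqQ : q ∉ Q := fun h =>
            (Finset.disjoint_left.mp hQF h)
              (Finset.mem_insert_of_mem (Finset.mem_singleton_self _))
          set v := insert p (insert q Q) with hv
          have hvcard : v.card = r := by
            rw [hv, Finset.card_insert_of_notMem (by
                intro h
                rcases Finset.mem_insert.mp h with h | h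
                · exact hpq h
                · exact hpQ h),
              Finset.card_insert_of_notMem hqQ, hQcard, hTcard]
            omega
          have hvsub : v ⊆ Finset.Icc 1 n := by
            intro x hx
            rcases Finset.mem_insert.mp hx with rfl | hx
            · exact (hmem A hA).2 hpA
            rcases Finset.mem_insert.mp hx with rfl | hx
            · exact (hmem E hE).2 hqE
            · exact hQn hx
          have hAnotin : A ∉ insert B (insert E T) := by
            simp only [Finset.mem_insert]
            push_neg
            exact ⟨hAB, fun h => hEA h.symm, fun hAT =>
              (Finset.mem_sdiff.mp (hTsub hAT)).2 (Finset.mem_insert_self _ _)⟩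
          have hBnotin : B ∉ insert E T := by
            simp only [Finset.mem_insert]
            push_neg
            exact ⟨fun h => hEB h.symm, fun hBT =>
              (Finset.mem_sdiff.mp (hTsub hBT)).2
                (Finset.mem_insert_of_mem (Finset.mem_insert_self _ _))⟩
          have hEnotin : E ∉ T := fun hET =>
            (Finset.mem_sdiff.mp (hTsub hET)).2
              (Finset.mem_insert_of_mem
                (Finset.mem_insert_of_mem (Finset.mem_singleton_self _)))
          have hHcard : (insert A (insert B (insert E T))).card = 3 + (r - 2) := by
            rw [Finset.card_insert_of_notMem hAnotin,
              Finset.card_insert_of_notMem hBnotin,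
              Finset.card_insert_of_notMem hEnotin, hTcard]
            omega
          have hHsub : insert A (insert B (insert E T)) ⊆ D := by
            intro C hC
            rcases Finset.mem_insert.mp hC with rfl | hC
            · exact hA
            rcases Finset.mem_insert.mp hC with rfl | hC
            · exact hB
            rcases Finset.mem_insert.mp hC with rfl | hC
            · exact hE
            · exact hTD hC
          by_cases hvD : v ∈ D
          · have hvf : v ∈ D.filter (fun C => p ∈ C) :=
              Finset.mem_filter.mpr ⟨hvD, Finset.mem_insert_self _ _⟩
            rw [hMpAB] at hvf
            have hqv : q ∈ v := Finset.mem_insert_of_mem (Finset.mem_insert_self _ _)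
            rcases Finset.mem_insert.mp hvf with h' | h'
            · exact Finset.mem_union_left _ (h' ▸ hqv)
            · rw [Finset.mem_singleton] at h'
              exact Finset.mem_union_right _ (h' ▸ hqv)
          · exact absurd (kdom_contra hD (mem_KV.mpr ⟨hvsub, hvcard⟩) hvD hHsub (by
              intro C hC
              rcases Finset.mem_insert.mp hC with rfl | hC
              · exact Finset.not_disjoint_iff.mpr ⟨p, Finset.mem_insert_self _ _, hpA⟩
              rcases Finset.mem_insert.mp hC with rfl | hC
              · exact Finset.not_disjoint_iff.mpr ⟨p, Finset.mem_insert_self _ _, hpB⟩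
              rcases Finset.mem_insert.mp hC with rfl | hC
              · exact Finset.not_disjoint_iff.mpr
                  ⟨q, Finset.mem_insert_of_mem (Finset.mem_insert_self _ _), hqE⟩
              · obtain ⟨x, hxQ, hxC⟩ := hQhit C hC
                exact Finset.not_disjoint_iff.mpr
                  ⟨x, Finset.mem_insert_of_mem (Finset.mem_insert_of_mem hxQ), hxC⟩)
              (by rw [hHcard]; omega) hkm) (fun h => h)
        -- now pick two distinct members outside {A,B}
        have hD2card : (D \ {A, B}).card = m - 2 := by
          rw [Finset.card_sdiff_of_subset hABsubD, hABc]
        obtain ⟨E₁, hE₁, E₂, hE₂, hE12⟩ := Finset.one_lt_card.mp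
          (show 1 < (D \ {A, B}).card by rw [hD2card]; omega)
        have hE₁D := (Finset.mem_sdiff.mp hE₁).1
        have hE₂D := (Finset.mem_sdiff.mp hE₂).1
        have hE₁AB := (Finset.mem_sdiff.mp hE₁).2
        have hE₂AB := (Finset.mem_sdiff.mp hE₂).2
        simp only [Finset.mem_insert, Finset.mem_singleton] at hE₁AB hE₂AB
        push_neg at hE₁AB hE₂AB
        have hE₁sub : E₁ ⊆ A ∪ B := fun q hq =>
          claim E₁ hE₁D hE₁AB.1 hE₁AB.2 q hq
        have hE₂sub : E₂ ⊆ A ∪ B := fun q hq =>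
          claim E₂ hE₂D hE₂AB.1 hE₂AB.2 q hq
        have hdisjE : Disjoint E₁ E₂ := by
          rw [Finset.disjoint_left]
          intro x hx1 hx2
          rcases Finset.mem_union.mp (hE₁sub hx1) with hxA | hxB
          · have hsub' : ({E₁, E₂, A} : Finset (Finset ℕ)) ⊆ D.filter (fun C => x ∈ C) := by
              intro C hC
              rcases Finset.mem_insert.mp hC with rfl | hC
              · exact Finset.mem_filter.mpr ⟨hE₁D, hx1⟩
              rcases Finset.mem_insert.mp hC with rfl | hC
              · exact Finset.mem_filter.mpr ⟨hE₂D, hx2⟩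
              · rw [Finset.mem_singleton] at hC; subst hC
                exact Finset.mem_filter.mpr ⟨hA, hxA⟩
            have hc3 : ({E₁, E₂, A} : Finset (Finset ℕ)).card = 3 := by
              rw [Finset.card_insert_of_notMem (by
                  simp only [Finset.mem_insert, Finset.mem_singleton]
                  push_neg
                  exact ⟨hE12, hE₁AB.1⟩),
                Finset.card_insert_of_notMem (by
                  simp only [Finset.mem_singleton]
                  exact hE₂AB.1),
                Finset.card_singleton]
            have h1 := Finset.card_le_card hsub'
            have h2 := hd3 x
            unfold multCount at h2
            omega
          · have hsub' : ({E₁, E₂, B} : Finset (Finset ℕ)) ⊆ D.filter (fun C => x ∈ C) := by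
              intro C hC
              rcases Finset.mem_insert.mp hC with rfl | hC
              · exact Finset.mem_filter.mpr ⟨hE₁D, hx1⟩
              rcases Finset.mem_insert.mp hC with rfl | hC
              · exact Finset.mem_filter.mpr ⟨hE₂D, hx2⟩
              · rw [Finset.mem_singleton] at hC; subst hC
                exact Finset.mem_filter.mpr ⟨hB, hxB⟩
            have hc3 : ({E₁, E₂, B} : Finset (Finset ℕ)).card = 3 := by
              rw [Finset.card_insert_of_notMem (by
                  simp only [Finset.mem_insert, Finset.mem_singleton]
                  push_neg
                  exact ⟨hE12, hE₁AB.2⟩),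
                Finset.card_insert_of_notMem (by
                  simp only [Finset.mem_singleton]
                  exact hE₂AB.2),
                Finset.card_singleton]
            have h1 := Finset.card_le_card hsub'
            have h2 := hd3 x
            unfold multCount at h2
            omega
        have hcup : E₁ ∪ E₂ ⊆ A ∪ B := Finset.union_subset hE₁sub hE₂sub
        have h2r : (E₁ ∪ E₂).card = 2 * r := by
          rw [Finset.card_union_of_disjoint hdisjE, (hmem E₁ hE₁D).1, (hmem E₂ hE₂D).1]
          ring
        have hABcard : (A ∪ B).card + (A ∩ B).card = 2 * r := by
          rw [Finset.card_union_add_card_inter, (hmem A hA).1, (hmem B hB).1]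
          ring
        have hABint : 1 ≤ (A ∩ B).card :=
          Finset.card_pos.mpr ⟨p, Finset.mem_inter.mpr ⟨hpA, hpB⟩⟩
        have := Finset.card_le_card hcup
        omega
  · -- pairwise disjoint case
    push_neg at hd2
    have hpw : ∀ A ∈ D, ∀ B ∈ D, A ≠ B → Disjoint A B := by
      intro A hA B hB hAB
      rw [Finset.disjoint_left]
      intro x hxA hxB
      exact (hd2 x A B hA hB hAB hxA) hxB
    have hUcard : U.card = m * r := by
      have h0 : U.card = ∑ A ∈ D, A.card := Finset.card_biUnion hpw
      rw [h0, hsum]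
    have hmlt : m < k + r := by
      by_contra hcon
      push_neg at hcon
      have hmeq : m = k + r := by omega
      have : m * r = n + 1 := by rw [hmeq, hn1, Nat.mul_comm]
      omega
    set t := m - k + 1 with ht
    have htr : t ≤ r := by omega
    have hslack : m * r + r ≤ n + 1 := by
      calc m*r + r = (m+1)*r := by ring
        _ ≤ (k+r)*r := Nat.mul_le_mul_right r (by omega)
        _ = r*(k+r) := by ring
        _ = n+1 := hn1.symm
    obtain ⟨T, hTD, hTcard⟩ := Finset.exists_subset_card_eq (s := D) (n := t) (by omega)
    obtain ⟨Q, hQcard, _, hQn, hQin, hQhit⟩ :=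
      exists_transversal T
        (fun A hA => ⟨le_of_eq (hmem A (hTD hA)).1.symm, (hmem A (hTD hA)).2⟩)
        ∅ (by rw [Finset.card_empty, hTcard]; omega)
    obtain ⟨O, hOsub, hOcard⟩ := Finset.exists_subset_card_eq (s := Finset.Icc 1 n \ U) (n := r - t)
      (by rw [havail]; omega)
    have hQU : Q ⊆ U := by
      intro q hq
      obtain ⟨A, hAT, hqA⟩ := hQin q hq
      exact Finset.mem_biUnion.mpr ⟨A, hTD hAT, hqA⟩
    have hQO : Disjoint Q O := by
      rw [Finset.disjoint_left]
      intro q hq hqO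
      exact (Finset.mem_sdiff.mp (hOsub hqO)).2 (hQU hq)
    set v := Q ∪ O with hv
    have hvcard : v.card = r := by
      rw [hv, Finset.card_union_of_disjoint hQO, hQcard, hTcard, hOcard]
      omega
    have hvsub : v ⊆ Finset.Icc 1 n := by
      rw [hv]
      apply Finset.union_subset hQn
      intro x hx
      exact (Finset.mem_sdiff.mp (hOsub hx)).1
    have hvD : v ∉ D := by
      intro hvD
      by_cases hcase : t ≤ r - 1
      · have hOne : O.Nonempty := Finset.card_pos.mp (by omega)
        obtain ⟨o, ho⟩ := hOne
        have : o ∈ U := Finset.mem_biUnion.mpr ⟨v, hvD, Finset.mem_union_right _ ho⟩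
        exact (Finset.mem_sdiff.mp (hOsub ho)).2 this
      · have htr2 : t = r := by omega
        have : ∃ B ∈ T, B ≠ v := by
          by_contra hcon
          push_neg at hcon
          have : T ⊆ {v} := fun B hB => Finset.mem_singleton.mpr (hcon B hB)
          have := Finset.card_le_card this
          rw [hTcard, Finset.card_singleton] at this
          omega
        obtain ⟨B, hBT, hBv⟩ := this
        obtain ⟨q, hqQ, hqB⟩ := hQhit B hBT
        have hdisj := hpw v hvD B (hTD hBT) (Ne.symm hBv)
        exact Finset.disjoint_left.mp hdisj (Finset.mem_union_left _ hqQ) hqB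
    exact kdom_contra hD (mem_KV.mpr ⟨hvsub, hvcard⟩) hvD hTD
      (fun A hAT => by
        obtain ⟨q, hqQ, hqA⟩ := hQhit A hAT
        exact Finset.not_disjoint_iff.mpr ⟨q, Finset.mem_union_left _ hqQ, hqA⟩)
      (by rw [hTcard]) hkm


def blkF (r i : ℕ) : Finset ℕ := Finset.Icc (r*i+1) (r*i+r)

def tailL (k r : ℕ) : Finset ℕ := Finset.Icc (r*(k+r-1)+1) (r*(k+r)-1)

def DSet (k r : ℕ) : Finset (Finset ℕ) :=
  (Finset.range (k+r-1)).image (blkF r) ∪ {insert 1 (tailL k r), insert 2 (tailL k r)}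

section Upper

variable {k r : ℕ} (hk : 2 ≤ k) (hr : 2 ≤ r)

lemma blkF_card (i : ℕ) : (blkF r i).card = r := by
  rw [blkF, Nat.card_Icc]; omega

include hk hr

lemma rK_lt : r*(k+r-1) + r = r*(k+r) := by
  have : k + r - 1 + 1 = k + r := by omega
  calc r*(k+r-1) + r = r*(k+r-1+1) := by ring_nf
    _ = r*(k+r) := by rw [this]

lemma tailL_card : (tailL k r).card = r - 1 := by
  have h := rK_lt hk hr
  rw [tailL, Nat.card_Icc]
  have h8 : 8 ≤ r*(k+r) := by nlinarith
  omega

lemma one_not_tailL : (1:ℕ) ∉ tailL k r := by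
  have h8 : 8 ≤ r*(k+r) := by nlinarith
  have h := rK_lt hk hr
  rw [tailL, Finset.mem_Icc]
  have h2 : 2*(k+r) ≤ r*(k+r) := Nat.mul_le_mul_right _ hr
  omega

lemma two_not_tailL : (2:ℕ) ∉ tailL k r := by
  have h8 : 8 ≤ r*(k+r) := by nlinarith
  have h := rK_lt hk hr
  rw [tailL, Finset.mem_Icc]
  intro hcon
  have h2 : 2*(k+r-1) ≤ r*(k+r-1) := Nat.mul_le_mul_right _ hr
  omega

lemma blkF_subset {i : ℕ} (hi : i < k+r-1) :
    blkF r i ⊆ Finset.Icc 1 (r*(k+r)-1) := by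
  have h := rK_lt hk hr
  have h8 : 8 ≤ r*(k+r) := by nlinarith
  intro x hx
  rw [blkF, Finset.mem_Icc] at hx
  rw [Finset.mem_Icc]
  have h2 : r*(i+1) ≤ r*(k+r-1) := Nat.mul_le_mul_left _ (by omega)
  have h3 : r*(i+1) = r*i + r := by ring
  omega

lemma blkF_max_lt {i : ℕ} (hi : i < k+r-1) {x : ℕ} (hx : x ∈ blkF r i) :
    x ≤ r*(k+r-1) := by
  rw [blkF, Finset.mem_Icc] at hx
  have h2 : r*(i+1) ≤ r*(k+r-1) := Nat.mul_le_mul_left _ (by omega)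
  have h3 : r*(i+1) = r*i + r := by ring
  omega

lemma tailL_min {x : ℕ} (hx : x ∈ tailL k r) : r*(k+r-1) + 1 ≤ x := by
  rw [tailL, Finset.mem_Icc] at hx; exact hx.1

lemma tailL_subset : tailL k r ⊆ Finset.Icc 1 (r*(k+r)-1) := by
  intro x hx
  rw [tailL, Finset.mem_Icc] at hx
  rw [Finset.mem_Icc]
  omega

lemma n_mem_tailL : (r*(k+r)-1) ∈ tailL k r := by
  have h := rK_lt hk hr
  have h8 : 8 ≤ r*(k+r) := by nlinarith
  rw [tailL, Finset.mem_Icc]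
  omega

lemma blkF_disj_tailL {i : ℕ} (hi : i < k+r-1) : Disjoint (blkF r i) (tailL k r) := by
  rw [Finset.disjoint_left]
  intro x hx hxL
  have h1 := blkF_max_lt hk hr hi hx
  have h2 := tailL_min hk hr hxL
  omega

lemma DSet_members {u : Finset ℕ} (hu : u ∈ DSet k r) :
    (∃ i < k+r-1, u = blkF r i) ∨ u = insert 1 (tailL k r) ∨ u = insert 2 (tailL k r) := by
  rw [DSet, Finset.mem_union] at hu
  rcases hu with hu | hu
  · rw [Finset.mem_image] at hu
    obtain ⟨i, hi, rfl⟩ := hu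
    exact Or.inl ⟨i, Finset.mem_range.mp hi, rfl⟩
  · rcases Finset.mem_insert.mp hu with h | h
    · exact Or.inr (Or.inl h)
    · exact Or.inr (Or.inr (Finset.mem_singleton.mp h))

lemma DSet_subset_verts : DSet k r ⊆ KneserVerts (r*(k+r)-1) r := by
  intro u hu
  rw [mem_KV]
  rcases DSet_members hk hr hu with ⟨i, hi, rfl⟩ | rfl | rfl
  · exact ⟨blkF_subset hk hr hi, blkF_card i⟩
  · constructor
    · intro x hx
      rcases Finset.mem_insert.mp hx with rfl | hx
      · rw [Finset.mem_Icc]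
        have h8 : 8 ≤ r*(k+r) := by nlinarith
        omega
      · exact tailL_subset hk hr hx
    · rw [Finset.card_insert_of_notMem (one_not_tailL hk hr), tailL_card hk hr]
      omega
  · constructor
    · intro x hx
      rcases Finset.mem_insert.mp hx with rfl | hx
      · rw [Finset.mem_Icc]
        have h8 : 8 ≤ r*(k+r) := by nlinarith
        omega
      · exact tailL_subset hk hr hx
    · rw [Finset.card_insert_of_notMem (two_not_tailL hk hr), tailL_card hk hr]
      omega

lemma BC_not_blk {x : ℕ} {i : ℕ} (hi : i < k+r-1) :
    insert x (tailL k r) ≠ blkF r i := by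
  intro hcon
  have h1 : (r*(k+r)-1) ∈ insert x (tailL k r) :=
    Finset.mem_insert_of_mem (n_mem_tailL hk hr)
  rw [hcon] at h1
  have h2 := blkF_max_lt hk hr hi h1
  have h := rK_lt hk hr
  have h8 : 8 ≤ r*(k+r) := by nlinarith
  omega

lemma DSet_card : (DSet k r).card = k + r + 1 := by
  have himg : ((Finset.range (k+r-1)).image (blkF r)).card = k+r-1 := by
    rw [Finset.card_image_of_injOn, Finset.card_range]
    intro i hi j hj hij
    simp only [Finset.coe_range, Set.mem_Iio] at hi hj
    by_contra hne
    rcases Nat.lt_or_ge i j with hlt | hge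
    · have h2 : r*(i+1) ≤ r*j := Nat.mul_le_mul_left _ (by omega)
      have h1 : r*i+1 ∈ blkF r i := by rw [blkF, Finset.mem_Icc]; omega
      rw [hij, blkF, Finset.mem_Icc] at h1
      have h3 : r*(i+1) = r*i + r := by ring
      omega
    · have h2 : r*(j+1) ≤ r*i := Nat.mul_le_mul_left _ (by omega)
      have h1 : r*j+1 ∈ blkF r j := by rw [blkF, Finset.mem_Icc]; omega
      rw [← hij, blkF, Finset.mem_Icc] at h1
      have h3 : r*(j+1) = r*j + r := by ring
      omega
  have hB : insert 1 (tailL k r) ∉ (Finset.range (k+r-1)).image (blkF r) := by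
    intro hcon
    rw [Finset.mem_image] at hcon
    obtain ⟨i, hi, hcon⟩ := hcon
    exact BC_not_blk hk hr (Finset.mem_range.mp hi) hcon.symm
  have hC : insert 2 (tailL k r) ∉ (Finset.range (k+r-1)).image (blkF r) := by
    intro hcon
    rw [Finset.mem_image] at hcon
    obtain ⟨i, hi, hcon⟩ := hcon
    exact BC_not_blk hk hr (Finset.mem_range.mp hi) hcon.symm
  have hBC : insert 1 (tailL k r) ≠ insert 2 (tailL k r) := by
    intro hcon
    have h1 : (1:ℕ) ∈ insert 2 (tailL k r) := by
      rw [← hcon]; exact Finset.mem_insert_self _ _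
    rcases Finset.mem_insert.mp h1 with h | h
    · omega
    · exact one_not_tailL hk hr h
  rw [DSet, Finset.card_union_of_disjoint, himg]
  · rw [Finset.card_insert_of_notMem (by simpa using hBC), Finset.card_singleton]
    omega
  · rw [Finset.disjoint_right]
    intro u hu
    rcases Finset.mem_insert.mp hu with rfl | hu
    · exact hB
    · rw [Finset.mem_singleton] at hu; subst hu; exact hC

end Upper


section Upper2

variable {k r : ℕ} (hk : 2 ≤ k) (hr : 2 ≤ r)

include hk hr

lemma g_blk {i x : ℕ} (hi : i < k+r-1) (hx : x ∈ blkF r i) :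
    blkF r ((x-1)/r) = blkF r i := by
  have hx' := hx
  rw [blkF, Finset.mem_Icc] at hx'
  have hdiv : (x-1)/r = i := by
    have hcomm : r*i = i*r := Nat.mul_comm r i
    apply Nat.div_eq_of_lt_le
    · omega
    · have : (i+1)*r = r*i + r := by ring
      omega
  rw [hdiv]

lemma hit_le {v : Finset ℕ} (hvs : v ⊆ Finset.Icc 1 (r*(k+r)-1)) (hvc : v.card = r) :
    ((DSet k r).filter (fun u => ¬ Disjoint v u)).card ≤ r + 1 := by
  classical
  set L := tailL k r with hL
  set g : ℕ → Finset ℕ := fun x => blkF r ((x-1)/r) with hg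
  set Sb := ((Finset.range (k+r-1)).image (blkF r)).filter (fun u => ¬ Disjoint v u) with hSb
  set Sbc := ({insert 1 L, insert 2 L} : Finset (Finset ℕ)).filter
    (fun u => ¬ Disjoint v u) with hSbc
  have heqD : (DSet k r).filter (fun u => ¬ Disjoint v u) = Sb ∪ Sbc := by
    rw [hSb, hSbc, ← Finset.filter_union, DSet]
  have hsplit : ((DSet k r).filter (fun u => ¬ Disjoint v u)).card ≤ Sb.card + Sbc.card := by
    rw [heqD]
    exact Finset.card_union_le _ _
  have hSbsub : Sb ⊆ (v \ L).image g := by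
    intro u hu
    rw [hSb, Finset.mem_filter, Finset.mem_image] at hu
    obtain ⟨⟨i, hi, rfl⟩, hnd⟩ := hu
    rw [Finset.mem_range] at hi
    obtain ⟨x, hxv, hxu⟩ := Finset.not_disjoint_iff.mp hnd
    have hxL : x ∉ L := fun hxL =>
      Finset.disjoint_left.mp (blkF_disj_tailL hk hr hi) hxu hxL
    exact Finset.mem_image.mpr ⟨x, Finset.mem_sdiff.mpr ⟨hxv, hxL⟩, g_blk hk hr hi hxu⟩
  have hSbcard : Sb.card ≤ ((v \ L).image g).card := Finset.card_le_card hSbsub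
  have hvsplit : (v ∩ L).card + (v \ L).card = r := by
    rw [Finset.card_inter_add_card_sdiff, hvc]
  have himle : ((v \ L).image g).card ≤ (v \ L).card := Finset.card_image_le
  have hSbc2 : Sbc.card ≤ 2 := by
    apply le_trans (Finset.card_le_card (Finset.filter_subset _ _))
    apply le_trans (Finset.card_insert_le _ _)
    rw [Finset.card_singleton]
  by_cases haL : (v ∩ L).Nonempty
  · have h1 : 1 ≤ (v ∩ L).card := Finset.card_pos.mpr haL
    omega
  · rw [Finset.not_nonempty_iff_eq_empty] at haL
    have ha0 : (v ∩ L).card = 0 := by rw [haL]; exact Finset.card_empty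
    have hvL : ∀ x ∈ v, x ∉ L := by
      intro x hx hxL
      have : x ∈ v ∩ L := Finset.mem_inter.mpr ⟨hx, hxL⟩
      rw [haL] at this
      exact absurd this (Finset.notMem_empty x)
    by_cases h1v : 1 ∈ v
    · by_cases h2v : 2 ∈ v
      · -- both 1 and 2 in v : image has a collision
        have h1L : 1 ∈ v \ L := Finset.mem_sdiff.mpr ⟨h1v, hvL 1 h1v⟩
        have h2L : 2 ∈ v \ L := Finset.mem_sdiff.mpr ⟨h2v, hvL 2 h2v⟩
        have hg1 : g 1 = blkF r 0 := by
          have h0 : (1-1)/r = 0 := by simp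
          show blkF r ((1-1)/r) = blkF r 0
          rw [h0]
        have hg2 : g 2 = blkF r 0 := by
          have h0 : (2-1)/r = 0 := Nat.div_eq_of_lt (by omega)
          show blkF r ((2-1)/r) = blkF r 0
          rw [h0]
        have heq : (v \ L).image g = ((v \ L).erase 2).image g := by
          conv_lhs => rw [← Finset.insert_erase h2L]
          rw [Finset.image_insert]
          apply Finset.insert_eq_self.mpr
          exact Finset.mem_image.mpr
            ⟨1, Finset.mem_erase.mpr ⟨by omega, h1L⟩, by rw [hg1, hg2]⟩
        have h3 : (((v \ L).erase 2).image g).card ≤ ((v \ L).erase 2).card :=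
          Finset.card_image_le
        have h4 : ((v \ L).erase 2).card = (v \ L).card - 1 :=
          Finset.card_erase_of_mem h2L
        have h5 : 1 ≤ (v \ L).card := Finset.card_pos.mpr ⟨2, h2L⟩
        rw [heq] at hSbcard
        omega
      · -- 2 ∉ v : Sbc ⊆ {insert 1 L}
        have hSbc1 : Sbc ⊆ {insert 1 L} := by
          intro u hu
          rw [hSbc, Finset.mem_filter] at hu
          rcases Finset.mem_insert.mp hu.1 with rfl | hu1
          · exact Finset.mem_singleton_self _
          · rw [Finset.mem_singleton] at hu1
            subst hu1
            obtain ⟨x, hxv, hxu⟩ := Finset.not_disjoint_iff.mp hu.2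
            rcases Finset.mem_insert.mp hxu with rfl | hxL
            · exact absurd hxv h2v
            · exact absurd hxL (hvL x hxv)
        have := Finset.card_le_card hSbc1
        rw [Finset.card_singleton] at this
        omega
    · by_cases h2v : 2 ∈ v
      · have hSbc1 : Sbc ⊆ {insert 2 L} := by
          intro u hu
          rw [hSbc, Finset.mem_filter] at hu
          rcases Finset.mem_insert.mp hu.1 with rfl | hu1
          · obtain ⟨x, hxv, hxu⟩ := Finset.not_disjoint_iff.mp hu.2
            rcases Finset.mem_insert.mp hxu with rfl | hxL
            · exact absurd hxv h1v
            · exact absurd hxL (hvL x hxv)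
          · exact hu1
        have := Finset.card_le_card hSbc1
        rw [Finset.card_singleton] at this
        omega
      · have hSbc0 : Sbc = ∅ := by
          rw [Finset.eq_empty_iff_forall_notMem]
          intro u hu
          rw [hSbc, Finset.mem_filter] at hu
          obtain ⟨x, hxv, hxu⟩ := Finset.not_disjoint_iff.mp hu.2
          rcases Finset.mem_insert.mp hu.1 with rfl | hu1
          · rcases Finset.mem_insert.mp hxu with rfl | hxL
            · exact h1v hxv
            · exact hvL x hxv hxL
          · rw [Finset.mem_singleton] at hu1
            subst hu1
            rcases Finset.mem_insert.mp hxu with rfl | hxL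
            · exact h2v hxv
            · exact hvL x hxv hxL
        rw [hSbc0] at hsplit
        rw [Finset.card_empty] at hsplit
        omega

lemma DSet_dom : ∀ v ∈ KneserVerts (r*(k+r)-1) r,
    k ≤ ((DSet k r).filter (fun u => KneserAdj v u)).card := by
  intro v hv
  rw [mem_KV] at hv
  have hhit := hit_le hk hr hv.1 hv.2
  have hsplit := Finset.card_filter_add_card_filter_not
    (s := DSet k r) (p := fun u => Disjoint v u)
  have hsubadj : (DSet k r).filter (fun u => Disjoint v u) ⊆
      (DSet k r).filter (fun u => KneserAdj v u) := by
    intro u hu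
    rw [Finset.mem_filter] at hu ⊢
    refine ⟨hu.1, ?_, hu.2⟩
    intro heq
    have hvne : v.Nonempty := by
      apply Finset.card_pos.mp
      rw [hv.2]
      omega
    obtain ⟨x, hx⟩ := hvne
    exact Finset.disjoint_left.mp hu.2 hx (heq ▸ hx)
  have h1 := Finset.card_le_card hsubadj
  have h2 := DSet_card hk hr
  omega

lemma DSet_total : IsKTupleTotalDomSet (r*(k+r)-1) r k (DSet k r) :=
  ⟨DSet_subset_verts hk hr, DSet_dom hk hr⟩

end Upper2

theorem stmt_8 (k r : ℕ) (hk : 2 ≤ k) (hr : 2 ≤ r) :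
    kdomNum (r * (k + r) - 1) r k = k + r + 1 ∧
    ktupleDomNum (r * (k + r) - 1) r k = k + r + 1 ∧
    ktupleTotalDomNum (r * (k + r) - 1) r k = k + r + 1 := by
  have hTot := DSet_total hk hr
  have hTup : IsKTupleDomSet (r * (k + r) - 1) r k (DSet k r) := by
    refine ⟨hTot.1, fun v hv => ?_⟩
    apply le_trans (hTot.2 v hv)
    apply Finset.card_le_card
    intro u hu
    rw [Finset.mem_filter] at hu ⊢
    exact ⟨hu.1, Or.inr hu.2⟩
  have hKD : IsKDomSet (r * (k + r) - 1) r k (DSet k r) :=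
    ⟨hTot.1, fun v hv _ => hTot.2 v hv⟩
  have htup_to_kd : ∀ D, IsKTupleDomSet (r * (k + r) - 1) r k D →
      IsKDomSet (r * (k + r) - 1) r k D := by
    intro D hD
    refine ⟨hD.1, fun v hv hvD => ?_⟩
    apply le_trans (hD.2 v hv)
    apply Finset.card_le_card
    intro u hu
    rw [Finset.mem_filter] at hu ⊢
    refine ⟨hu.1, ?_⟩
    rcases hu.2 with rfl | h
    · exact absurd hu.1 hvD
    · exact h
  have htot_to_kd : ∀ D, IsKTupleTotalDomSet (r * (k + r) - 1) r k D →
      IsKDomSet (r * (k + r) - 1) r k D :=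
    fun D hD => ⟨hD.1, fun v hv _ => hD.2 v hv⟩
  have hc := DSet_card hk hr
  simp only [kdomNum, ktupleDomNum, ktupleTotalDomNum]
  refine ⟨?_, ?_, ?_⟩
  · apply le_antisymm
    · exact Nat.sInf_le ⟨DSet k r, hKD, hc⟩
    · refine le_csInf ⟨k+r+1, ⟨DSet k r, hKD, hc⟩⟩ ?_
      rintro m ⟨D, hD, rfl⟩
      exact lower_bound k r hk hr D hD
  · apply le_antisymm
    · exact Nat.sInf_le ⟨DSet k r, hTup, hc⟩
    · refine le_csInf ⟨k+r+1, ⟨DSet k r, hTup, hc⟩⟩ ?_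
      rintro m ⟨D, hD, rfl⟩
      exact lower_bound k r hk hr D (htup_to_kd D hD)
  · apply le_antisymm
    · exact Nat.sInf_le ⟨DSet k r, hTot, hc⟩
    · refine le_csInf ⟨k+r+1, ⟨DSet k r, hTot, hc⟩⟩ ?_
      rintro m ⟨D, hD, rfl⟩
      exact lower_bound k r hk hr D (htot_to_kd D hD)
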